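/- Let α : R → A be a ring homomorphism between unital rings. Call an element s ∈ A left R-cofinite if A/As is a Noetherian left R-module via α, and let S_l be the set of left R-cofinite elements. Then S_l is multiplicatively closed. -/

import Mathlib

section
variable {R A : Type*} [Ring R] [Ring A] (α : R →+* A)

/-- Convert an `A`-linear map to an `R`-linear map for the `compHom` module structures. -/
def toRLin {M N : Type*} [AddCommGroup M] [AddCommGroup N] [Module A M] [Module A N]
    (f : M →ₗ[A] N) :
    letI : Module R M := Module.compHom M α
    letI : Module R N := Module.compHom N α
    M →ₗ[R] N :=
  letI : Module R M := Module.compHom M α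
  letI : Module R N := Module.compHom N α
  { toFun := f, map_add' := f.map_add, map_smul' := fun r x => f.map_smul (α r) x }
end

/-- A left ideal `L` of `A` is `R`-cofinite (via `α : R →+* A`) if `A ⧸ L` is a
Noetherian left `R`-module, where the `R`-action is obtained by restriction of
scalars along `α`. -/
def RCofiniteIdeal {R A : Type*} [Ring R] [Ring A] (α : R →+* A)
    (L : Submodule A A) : Prop :=
  @IsNoetherian R (A ⧸ L) _ _ (Module.compHom _ α)

/-- `s ∈ A` is left `R`-cofinite if the principal left ideal `As` is `R`-cofinite,
i.e. `A ⧸ As` is a Noetherian left `R`-module via `α`. -/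
def LeftCofinite {R A : Type*} [Ring R] [Ring A] (α : R →+* A) (s : A) : Prop :=
  RCofiniteIdeal α (Submodule.span A {s})

/-- The set `S_l` of left `R`-cofinite elements of `A` is multiplicatively closed. -/
theorem leftCofinite_mul_closed {R A : Type*} [Ring R] [Ring A] (α : R →+* A) :
    LeftCofinite α 1 ∧
      ∀ s t : A, LeftCofinite α s → LeftCofinite α t → LeftCofinite α (s * t) := by
  constructor
  · unfold LeftCofinite RCofiniteIdeal
    letI : Module R (A ⧸ Submodule.span A {(1:A)}) := Module.compHom _ α
    have h1 : (Submodule.span A {(1:A)}) = ⊤ := Ideal.span_singleton_one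
    have : Subsingleton (A ⧸ Submodule.span A {(1:A)}) := by
      rw [Submodule.Quotient.subsingleton_iff]; exact h1
    infer_instance
  · intro s t hs ht
    unfold LeftCofinite RCofiniteIdeal at *
    letI : Module R (A ⧸ Submodule.span A {s}) := Module.compHom _ α
    letI : Module R (A ⧸ Submodule.span A {t}) := Module.compHom _ α
    letI : Module R (A ⧸ Submodule.span A {s*t}) := Module.compHom _ α
    haveI : IsNoetherian R (A ⧸ Submodule.span A {s}) := hs
    haveI : IsNoetherian R (A ⧸ Submodule.span A {t}) := ht
    -- the A-linear map A/As → A/Ast, a ↦ a*t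
    have hle : Submodule.span A {s*t} ≤ Submodule.span A {t} := by
      rw [Submodule.span_le, Set.singleton_subset_iff]
      exact Submodule.smul_mem _ s (Submodule.mem_span_singleton_self t)
    have hker : Submodule.span A {s} ≤ LinearMap.ker
        ((Submodule.span A {s*t}).mkQ ∘ₗ LinearMap.toSpanSingleton A A t) := by
      rw [Submodule.span_le, Set.singleton_subset_iff]
      simp only [SetLike.mem_coe, LinearMap.mem_ker, LinearMap.comp_apply,
        LinearMap.toSpanSingleton_apply, Submodule.mkQ_apply,
        Submodule.Quotient.mk_eq_zero]
      exact Submodule.mem_span_singleton_self (s*t)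
    set fA : (A ⧸ Submodule.span A {s}) →ₗ[A] (A ⧸ Submodule.span A {s*t}) :=
      (Submodule.span A {s}).liftQ _ hker
    set gA : (A ⧸ Submodule.span A {s*t}) →ₗ[A] (A ⧸ Submodule.span A {t}) :=
      Submodule.mapQ _ _ LinearMap.id hle
    refine isNoetherian_of_range_eq_ker (toRLin α fA) (toRLin α gA) ?_
    ext x
    simp only [LinearMap.mem_range, LinearMap.mem_ker]
    constructor
    · rintro ⟨y, rfl⟩
      obtain ⟨a, rfl⟩ := Submodule.mkQ_surjective _ y
      show gA (fA _) = 0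
      simp only [fA, gA, Submodule.liftQ_apply, LinearMap.comp_apply,
        LinearMap.toSpanSingleton_apply, Submodule.mkQ_apply, Submodule.mapQ_apply,
        LinearMap.id_apply, Submodule.Quotient.mk_eq_zero]
      exact Submodule.smul_mem _ a (Submodule.mem_span_singleton_self t)
    · intro hx
      obtain ⟨a, rfl⟩ := Submodule.mkQ_surjective _ x
      have : gA (Submodule.Quotient.mk a) = 0 := hx
      simp only [gA, Submodule.mkQ_apply, Submodule.mapQ_apply, LinearMap.id_apply,
        Submodule.Quotient.mk_eq_zero, Submodule.mem_span_singleton] at this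
      obtain ⟨b, rfl⟩ := this
      refine ⟨Submodule.Quotient.mk b, ?_⟩
      show fA _ = _
      simp only [fA, Submodule.mkQ_apply, Submodule.liftQ_apply, LinearMap.comp_apply,
        LinearMap.toSpanSingleton_apply]
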